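/- Let f be a proper closed convex function on ℝ^m. Then ∂f(ℝ^m) is exactly the set of points at which the conjugate f* is subdifferentiable. In particular ri(dom f*) ⊆ ∂f(ℝ^m) ⊆ dom f*, and the closure of ∂f(ℝ^m) equals the closure of dom f*. -/

import Mathlib

open Filter Topology

namespace Soft

open Set

/-- `y` is a subgradient at `x` of the extended-real-valued function `f`:
`f(z) ≥ f(x) + yᵀ(z−x)` for all `z`. -/
def ESubgrad {m : ℕ} (f : (Fin m → ℝ) → EReal) (x y : Fin m → ℝ) : Prop :=
  ∀ z, f x + (((∑ i, y i * (z i - x i)) : ℝ) : EReal) ≤ f z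

/-- The conjugate function `f*(y) = sup_x (xᵀy − f(x))`. -/
noncomputable def econj {m : ℕ} (f : (Fin m → ℝ) → EReal) (y : Fin m → ℝ) : EReal :=
  ⨆ x : Fin m → ℝ, (((∑ i, x i * y i) : ℝ) : EReal) - f x
variable {m : ℕ}
def pr {m : ℕ} (x y : Fin m → ℝ) : ℝ := ∑ i, x i * y i
lemma pr_comm (x y : Fin m → ℝ) : pr x y = pr y x := by
  unfold pr; exact Finset.sum_congr rfl fun i _ => mul_comm _ _
lemma le_econj (f : (Fin m → ℝ) → EReal) (x y : Fin m → ℝ) :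
    ((pr x y : ℝ) : EReal) - f x ≤ econj f y := le_iSup (fun x => ((pr x y : ℝ) : EReal) - f x) x

lemma econj_le {f : (Fin m → ℝ) → EReal} {y : Fin m → ℝ} {c : EReal}
    (h : ∀ x, ((pr x y : ℝ) : EReal) - f x ≤ c) : econj f y ≤ c := iSup_le h

lemma esub_def {f : (Fin m → ℝ) → EReal} {x y : Fin m → ℝ} (h : ESubgrad f x y) (z : Fin m → ℝ) :
    f x + ((pr y z - pr y x : ℝ) : EReal) ≤ f z := by
  have := h z
  have e : (∑ i, y i * (z i - x i)) = pr y z - pr y x := by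
    unfold pr; rw [← Finset.sum_sub_distrib]
    exact Finset.sum_congr rfl fun i _ => by simp [mul_sub]
  rwa [e] at this

lemma esub_top {f : (Fin m → ℝ) → EReal} {x y : Fin m → ℝ} (h : ESubgrad f x y)
    (hx : f x = ⊤) (z : Fin m → ℝ) : f z = ⊤ := by
  have := esub_def h z
  rw [hx, EReal.top_add_coe] at this
  exact top_le_iff.1 this


lemma ereal_cases (a : EReal) : a = ⊥ ∨ a = ⊤ ∨ ∃ r : ℝ, a = (r : EReal) := by
  induction a using EReal.rec with
  | bot => exact Or.inl rfl
  | top => exact Or.inr (Or.inl rfl)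
  | coe r => exact Or.inr (Or.inr ⟨r, rfl⟩)

/-- key: subgradient implies conjugate bound -/
lemma esub_key {f : (Fin m → ℝ) → EReal} {x y : Fin m → ℝ} (h : ESubgrad f x y) :
    econj f y ≤ ((pr x y : ℝ) : EReal) - f x := by
  refine iSup_le fun z => ?_
  show ((pr z y : ℝ) : EReal) - f z ≤ ((pr x y : ℝ) : EReal) - f x
  rcases ereal_cases (f x) with hfx | hfx | ⟨r, hfx⟩
  · rw [hfx, EReal.coe_sub_bot]; exact le_top
  · rw [esub_top h hfx z, EReal.sub_top]; exact bot_le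
  · rcases ereal_cases (f z) with hfz | hfz | ⟨s, hfz⟩
    ·
      exfalso
      have := esub_def h z
      rw [hfx, hfz, ← EReal.coe_add] at this
      exact (EReal.coe_ne_bot _) (le_bot_iff.1 this)
    · rw [hfz, EReal.sub_top]; exact bot_le
    · have := esub_def h z
      rw [hfx, hfz, ← EReal.coe_add, EReal.coe_le_coe_iff] at this
      rw [hfx, hfz, ← EReal.coe_sub, ← EReal.coe_sub, EReal.coe_le_coe_iff]
      have hzy : pr z y = pr y z := pr_comm _ _
      have hxy : pr x y = pr y x := pr_comm _ _
      linarith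

/-- Forward: y ∈ ∂f(x) ⇒ x ∈ ∂f*(y), fully general. -/
lemma esub_fwd {f : (Fin m → ℝ) → EReal} {x y : Fin m → ℝ} (h : ESubgrad f x y) :
    ESubgrad (econj f) y x := by
  intro w
  have h1 : econj f y ≤ ((pr x y : ℝ) : EReal) - f x := esub_key h
  have h2 : ((pr x w : ℝ) : EReal) - f x ≤ econj f w :=
    le_iSup (fun z => ((pr z w : ℝ) : EReal) - f z) x
  have e : (∑ i, x i * (w i - y i)) = pr x w - pr x y := by
    unfold pr; rw [← Finset.sum_sub_distrib]
    exact Finset.sum_congr rfl fun i _ => by simp [mul_sub]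
  rw [e]
  refine le_trans (le_trans (add_le_add h1 (le_refl _)) ?_) h2
  -- (pr x y - f x) + (pr x w - pr x y) ≤ pr x w - f x
  rcases ereal_cases (f x) with hfx | hfx | ⟨r, hfx⟩
  · rw [hfx, EReal.coe_sub_bot, EReal.coe_sub_bot, EReal.top_add_coe]
  · rw [hfx, EReal.sub_top, EReal.sub_top, EReal.bot_add]
  · rw [hfx, ← EReal.coe_sub, ← EReal.coe_sub, ← EReal.coe_add, EReal.coe_le_coe_iff]
    ring_nf
    exact le_refl _

/-- If some value of f is ⊤ at a subgradient point then f ≡ ⊤, contradicting properness. -/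
lemma esub_fx_ne_top {f : (Fin m → ℝ) → EReal} {x y : Fin m → ℝ} (h : ESubgrad f x y)
    (hproper : ∃ x, f x ≠ ⊤) : f x ≠ ⊤ := by
  intro hx
  obtain ⟨x0, hx0⟩ := hproper
  exact hx0 (esub_top h hx x0)

lemma esub_dom {f : (Fin m → ℝ) → EReal} {x y : Fin m → ℝ} (h : ESubgrad f x y)
    (hnbot : ∀ x, f x ≠ ⊥) (hproper : ∃ x, f x ≠ ⊤) : econj f y ≠ ⊤ := by
  rcases ereal_cases (f x) with hfx | hfx | ⟨r, hfx⟩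
  · exact absurd hfx (hnbot x)
  · exact absurd hfx (esub_fx_ne_top h hproper)
  · intro htop
    have := esub_key h
    rw [htop, hfx, ← EReal.coe_sub, top_le_iff] at this
    exact (EReal.coe_ne_top _) this

lemma econj_ne_bot {f : (Fin m → ℝ) → EReal} (hnbot : ∀ x, f x ≠ ⊥)
    (hproper : ∃ x, f x ≠ ⊤) (y : Fin m → ℝ) : econj f y ≠ ⊥ := by
  obtain ⟨x0, hx0⟩ := hproper
  rcases ereal_cases (f x0) with h | h | ⟨r, h⟩
  · exact absurd h (hnbot x0)
  · exact absurd h hx0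
  · intro hb
    have := le_econj f x0 y
    rw [hb, h, ← EReal.coe_sub, le_bot_iff] at this
    exact (EReal.coe_ne_bot _) this

/-- easy direction of biconjugation: f** ≤ f -/
lemma biconj_le {f : (Fin m → ℝ) → EReal} (hnbot : ∀ x, f x ≠ ⊥) (z : Fin m → ℝ) :
    econj (econj f) z ≤ f z := by
  refine iSup_le fun y => ?_
  show ((pr y z : ℝ) : EReal) - econj f y ≤ f z
  rcases ereal_cases (f z) with hfz | hfz | ⟨s, hfz⟩
  · exact absurd hfz (hnbot z)
  · rw [hfz]; exact le_top
  · have h1 : ((pr z y - s : ℝ) : EReal) ≤ econj f y := by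
      have := le_econj f z y
      rwa [hfz, ← EReal.coe_sub] at this
    calc ((pr y z : ℝ) : EReal) - econj f y ≤ ((pr y z : ℝ) : EReal) - ((pr z y - s : ℝ) : EReal) :=
          EReal.sub_le_sub (le_refl _) h1
      _ = ((s : ℝ) : EReal) := by
          rw [← EReal.coe_sub, EReal.coe_eq_coe_iff, pr_comm y z]; ring
      _ ≤ f z := by rw [hfz]

lemma pr_combo (x y z : Fin m → ℝ) (a b : ℝ) :
    pr x (a • y + b • z) = a * pr x y + b * pr x z := by
  unfold pr
  rw [Finset.mul_sum, Finset.mul_sum, ← Finset.sum_add_distrib]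
  refine Finset.sum_congr rfl fun i _ => ?_
  simp [Pi.add_apply, Pi.smul_apply, smul_eq_mul]; ring

lemma econj_convex {f : (Fin m → ℝ) → EReal} (hnbot : ∀ x, f x ≠ ⊥)
    (y z : Fin m → ℝ) {a b : ℝ} (ha : 0 ≤ a) (hb : 0 ≤ b) (hab : a + b = 1) :
    econj f (a • y + b • z) ≤ (a : EReal) * econj f y + (b : EReal) * econj f z := by
  rcases eq_or_lt_of_le ha with rfl | ha'
  · have hb1 : b = 1 := by linarith
    subst hb1
    simp only [zero_smul, one_smul, zero_add, EReal.coe_zero, EReal.coe_one, one_mul,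
      EReal.zero_mul]
    exact le_rfl
  rcases eq_or_lt_of_le hb with rfl | hb'
  · have ha1 : a = 1 := by linarith
    subst ha1
    simp only [zero_smul, one_smul, add_zero, EReal.coe_zero, EReal.coe_one, one_mul,
      EReal.zero_mul]
    exact le_rfl
  refine iSup_le fun x => ?_
  show ((pr x (a • y + b • z) : ℝ) : EReal) - f x ≤ _
  rcases ereal_cases (f x) with hfx | hfx | ⟨r, hfx⟩
  · exact absurd hfx (hnbot x)
  · rw [hfx, EReal.sub_top]; exact bot_le
  · have h1 : ((pr x y - r : ℝ) : EReal) ≤ econj f y := by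
      have := le_econj f x y; rwa [hfx, ← EReal.coe_sub] at this
    have h2 : ((pr x z - r : ℝ) : EReal) ≤ econj f z := by
      have := le_econj f x z; rwa [hfx, ← EReal.coe_sub] at this
    have e1 : ((pr x (a • y + b • z) : ℝ) : EReal) - f x
        = ((a * (pr x y - r) + b * (pr x z - r) : ℝ) : EReal) := by
      rw [hfx, ← EReal.coe_sub, EReal.coe_eq_coe_iff, pr_combo]
      have : a * r + b * r = r := by rw [← add_mul, hab, one_mul]
      ring_nf
      linarith [this]
    rw [e1, EReal.coe_add, EReal.coe_mul, EReal.coe_mul]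
    exact add_le_add (mul_le_mul_of_nonneg_left h1 (by exact_mod_cast ha))
      (mul_le_mul_of_nonneg_left h2 (by exact_mod_cast hb))

lemma dom_econj_convex {f : (Fin m → ℝ) → EReal} (hnbot : ∀ x, f x ≠ ⊥)
    (hproper : ∃ x, f x ≠ ⊤) : Convex ℝ {y | econj f y ≠ ⊤} := by
  intro y hy z hz a b ha hb hab
  simp only [Set.mem_setOf_eq] at *
  intro htop
  have hle := econj_convex hnbot y z ha hb hab
  rw [htop, top_le_iff] at hle
  rcases ereal_cases (econj f y) with h | h | ⟨r, h⟩
  · exact econj_ne_bot hnbot hproper y h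
  · exact hy h
  · rcases ereal_cases (econj f z) with h2 | h2 | ⟨s, h2⟩
    · exact econj_ne_bot hnbot hproper z h2
    · exact hz h2
    · rw [h, h2, ← EReal.coe_mul, ← EReal.coe_mul, ← EReal.coe_add] at hle
      exact (EReal.coe_ne_top _) hle

/-- epigraph -/
def epi {m : ℕ} (h : (Fin m → ℝ) → EReal) : Set ((Fin m → ℝ) × ℝ) :=
  {p | h p.1 ≤ (p.2 : EReal)}

lemma epi_convex {h : (Fin m → ℝ) → EReal} (hnbot : ∀ x, h x ≠ ⊥)
    (hconv : ∀ (x y : Fin m → ℝ) (a b : ℝ), 0 ≤ a → 0 ≤ b → a + b = 1 →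
      h (a • x + b • y) ≤ (a : EReal) * h x + (b : EReal) * h y) :
    Convex ℝ (epi h) := by
  rintro ⟨x, t⟩ hx ⟨y, s⟩ hy a b ha hb hab
  simp only [epi, Set.mem_setOf_eq] at hx hy ⊢
  rcases ereal_cases (h x) with h1 | h1 | ⟨r1, h1⟩
  · exact absurd h1 (hnbot x)
  · rw [h1] at hx; exact absurd (top_le_iff.1 hx) (EReal.coe_ne_top t)
  rcases ereal_cases (h y) with h2 | h2 | ⟨r2, h2⟩
  · exact absurd h2 (hnbot y)
  · rw [h2] at hy; exact absurd (top_le_iff.1 hy) (EReal.coe_ne_top s)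
  have hr1 : r1 ≤ t := by rw [h1, EReal.coe_le_coe_iff] at hx; exact hx
  have hr2 : r2 ≤ s := by rw [h2, EReal.coe_le_coe_iff] at hy; exact hy
  have := hconv x y a b ha hb hab
  rw [h1, h2, ← EReal.coe_mul, ← EReal.coe_mul, ← EReal.coe_add] at this
  refine le_trans this ?_
  show ((a * r1 + b * r2 : ℝ) : EReal) ≤ ((a * t + b * s : ℝ) : EReal)
  rw [EReal.coe_le_coe_iff]
  have := mul_le_mul_of_nonneg_left hr1 ha
  have := mul_le_mul_of_nonneg_left hr2 hb
  linarith

lemma epi_closed {h : (Fin m → ℝ) → EReal} (hlsc : LowerSemicontinuous h) :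
    IsClosed (epi h) := by
  rw [← isOpen_compl_iff]
  rw [isOpen_iff_mem_nhds]
  rintro ⟨x, t⟩ hp
  simp only [epi, Set.mem_compl_iff, Set.mem_setOf_eq, not_le] at hp
  obtain ⟨c, hc1, hc2⟩ := EReal.lt_iff_exists_real_btwn.1 hp
  have h1 : {y | (c : EReal) < h y} ∈ 𝓝 x := hlsc x c hc2
  have h2 : Iio c ∈ 𝓝 t := Iio_mem_nhds (by exact_mod_cast hc1)
  rw [nhds_prod_eq]
  refine Filter.mem_of_superset (Filter.prod_mem_prod h1 h2) ?_
  rintro ⟨y, s⟩ ⟨hy, hs⟩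
  simp only [Set.mem_compl_iff, epi, Set.mem_setOf_eq, not_le]
  exact lt_trans (by exact_mod_cast hs) hy

/-- representation of a continuous linear functional on `(Fin m → ℝ) × ℝ` -/
lemma Lrep (L : ((Fin m → ℝ) × ℝ) →L[ℝ] ℝ) (x : Fin m → ℝ) (t : ℝ) :
    L (x, t) = pr x (fun i => L (fun j => if i = j then 1 else 0, 0)) + t * L (0, 1) := by
  have hsplit : (x, t) = ((x, 0) : (Fin m → ℝ) × ℝ) + (0, t) := by simp
  rw [hsplit, map_add]
  congr 1
  · let ℓ : (Fin m → ℝ) →ₗ[ℝ] ℝ :=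
      { toFun := fun v => L (v, 0)
        map_add' := by
          intro v w
          show L (v + w, 0) = L (v, 0) + L (w, 0)
          rw [show ((v + w, 0) : (Fin m → ℝ) × ℝ) = (v, 0) + (w, 0) by simp, map_add]
        map_smul' := by
          intro c v
          show L (c • v, 0) = c • L (v, 0)
          rw [show ((c • v, 0) : (Fin m → ℝ) × ℝ) = c • (v, 0) by simp, map_smul] }
    have := LinearMap.pi_apply_eq_sum_univ ℓ x
    show ℓ x = _
    rw [this]
    unfold pr
    exact Finset.sum_congr rfl fun i _ => by simp [ℓ, smul_eq_mul]
  · rw [show ((0, t) : (Fin m → ℝ) × ℝ) = t • (0, 1) by simp, map_smul, smul_eq_mul]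

lemma pr_mul_right (x : Fin m → ℝ) (c : ℝ) (y : Fin m → ℝ) :
    pr x (fun i => c * y i) = c * pr x y := by
  unfold pr; rw [Finset.mul_sum]; exact Finset.sum_congr rfl fun i _ => by ring

lemma pr_add_right' (x y z : Fin m → ℝ) :
    pr x (fun i => y i + z i) = pr x y + pr x z := by
  unfold pr; rw [← Finset.sum_add_distrib]; exact Finset.sum_congr rfl fun i _ => by ring

/-- Step A: a closed proper convex function has an affine minorant. -/
lemma exists_affine_minorant {f : (Fin m → ℝ) → EReal}
    (hconv : ∀ (x y : Fin m → ℝ) (a b : ℝ), 0 ≤ a → 0 ≤ b → a + b = 1 →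
      f (a • x + b • y) ≤ (a : EReal) * f x + (b : EReal) * f y)
    (hnbot : ∀ x, f x ≠ ⊥) (hproper : ∃ x, f x ≠ ⊤) (hclosed : LowerSemicontinuous f) :
    ∃ (y0 : Fin m → ℝ) (c0 : ℝ), ∀ x, ((pr x y0 + c0 : ℝ) : EReal) ≤ f x := by
  obtain ⟨x1, hx1⟩ := hproper
  rcases ereal_cases (f x1) with h1 | h1 | ⟨r1, h1⟩
  · exact absurd h1 (hnbot x1)
  · exact absurd h1 hx1
  have hpt : ((x1, r1 - 1) : (Fin m → ℝ) × ℝ) ∉ epi f := by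
    simp only [epi, Set.mem_setOf_eq, h1, EReal.coe_le_coe_iff, not_le]
    linarith
  obtain ⟨L, u, hLu, hupt⟩ :=
    geometric_hahn_banach_closed_point (epi_convex hnbot hconv) (epi_closed hclosed) hpt
  set yv : Fin m → ℝ := fun i => L (fun j => if i = j then 1 else 0, 0) with hyv
  set sv : ℝ := L (0, 1) with hsv
  have hL : ∀ (x : Fin m → ℝ) (t : ℝ), L (x, t) = pr x yv + t * sv := fun x t => Lrep L x t
  have hmem : ((x1, r1) : (Fin m → ℝ) × ℝ) ∈ epi f := by
    simp only [epi, Set.mem_setOf_eq, h1]; exact le_refl _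
  have h2 : pr x1 yv + r1 * sv < u := by rw [← hL]; exact hLu _ hmem
  have h3 : u < pr x1 yv + (r1 - 1) * sv := by rw [← hL]; exact hupt
  have hs : sv < 0 := by nlinarith
  set c : ℝ := (-sv)⁻¹ with hc
  have hcpos : 0 < c := inv_pos.2 (by linarith)
  refine ⟨fun i => c * yv i, c * (-u), fun x => ?_⟩
  rcases ereal_cases (f x) with hfx | hfx | ⟨rx, hfx⟩
  · exact absurd hfx (hnbot x)
  · rw [hfx]; exact le_top
  · rw [hfx, EReal.coe_le_coe_iff]
    have hmx : ((x, rx) : (Fin m → ℝ) × ℝ) ∈ epi f := by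
      simp only [epi, Set.mem_setOf_eq, hfx]; exact le_refl _
    have h4 : pr x yv + rx * sv < u := by rw [← hL]; exact hLu _ hmx
    rw [pr_mul_right]
    have hcs : c * (-sv) = 1 := inv_mul_cancel₀ (by linarith)
    have key := mul_lt_mul_of_pos_left (show pr x yv - u < rx * (-sv) by nlinarith) hcpos
    have e1 : c * (rx * (-sv)) = rx := by rw [mul_comm rx, ← mul_assoc, hcs, one_mul]
    nlinarith [key, e1]

/-- hard direction of biconjugation: f ≤ f** for closed proper convex f. -/
lemma biconj_ge {f : (Fin m → ℝ) → EReal}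
    (hconv : ∀ (x y : Fin m → ℝ) (a b : ℝ), 0 ≤ a → 0 ≤ b → a + b = 1 →
      f (a • x + b • y) ≤ (a : EReal) * f x + (b : EReal) * f y)
    (hnbot : ∀ x, f x ≠ ⊥) (hproper : ∃ x, f x ≠ ⊤) (hclosed : LowerSemicontinuous f)
    (x0 : Fin m → ℝ) : f x0 ≤ econj (econj f) x0 := by
  by_contra hcon
  rw [not_le] at hcon
  obtain ⟨β, hb1, hb2⟩ := EReal.lt_iff_exists_real_btwn.1 hcon
  -- it suffices to show β ≤ f**(x0)
  suffices hsuff : (β : EReal) ≤ econj (econj f) x0 by exact absurd hb1 (not_lt.2 hsuff)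
  -- separate (x0, β) from epi f
  have hpt : ((x0, β) : (Fin m → ℝ) × ℝ) ∉ epi f := by
    simp only [epi, Set.mem_setOf_eq, not_le]; exact hb2
  obtain ⟨L, u, hLu, hupt⟩ :=
    geometric_hahn_banach_closed_point (epi_convex hnbot hconv) (epi_closed hclosed) hpt
  set yv : Fin m → ℝ := fun i => L (fun j => if i = j then 1 else 0, 0) with hyv
  set sv : ℝ := L (0, 1) with hsv
  have hL : ∀ (x : Fin m → ℝ) (t : ℝ), L (x, t) = pr x yv + t * sv := fun x t => Lrep L x t
  have hupt' : u < pr x0 yv + β * sv := by rw [← hL]; exact hupt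
  obtain ⟨x1, hx1⟩ := hproper
  rcases ereal_cases (f x1) with h1 | h1 | ⟨r1, h1⟩
  · exact absurd h1 (hnbot x1)
  · exact absurd h1 hx1
  have hdom : ∀ (x : Fin m → ℝ) (rx : ℝ), f x = (rx : EReal) → pr x yv + rx * sv < u := by
    intro x rx hfx
    have hmx : ((x, rx) : (Fin m → ℝ) × ℝ) ∈ epi f := by
      simp only [epi, Set.mem_setOf_eq, hfx]; exact le_refl _
    rw [← hL]; exact hLu _ hmx
  have hsle : sv ≤ 0 := by
    by_contra hpos
    push_neg at hpos
    set t : ℝ := max 0 ((u - pr x1 yv - r1 * sv) / sv) with ht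
    have ht0 : 0 ≤ t := le_max_left _ _
    have hmx : ((x1, r1 + t) : (Fin m → ℝ) × ℝ) ∈ epi f := by
      simp only [epi, Set.mem_setOf_eq, h1, EReal.coe_le_coe_iff]; linarith
    have hlt : pr x1 yv + (r1 + t) * sv < u := by rw [← hL]; exact hLu _ hmx
    have htq : (u - pr x1 yv - r1 * sv) / sv ≤ t := le_max_right _ _
    have := mul_le_mul_of_nonneg_right htq hpos.le
    rw [div_mul_cancel₀ _ (ne_of_gt hpos)] at this
    nlinarith
  rcases eq_or_lt_of_le hsle with hs0 | hsneg
  · -- vertical case sv = 0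
    obtain ⟨y0, c0, hmin⟩ := exists_affine_minorant hconv hnbot ⟨x1, hx1⟩ hclosed
    have hdomv : ∀ (x : Fin m → ℝ) (rx : ℝ), f x = (rx : EReal) → pr x yv < u := by
      intro x rx hfx
      have := hdom x rx hfx
      rw [hs0, mul_zero, add_zero] at this; exact this
    have hden : 0 < pr x0 yv - u := by
      have := hupt'; rw [hs0, mul_zero, add_zero] at this; linarith
    set lam : ℝ := max 0 ((β - pr x0 y0 - c0) / (pr x0 yv - u)) with hlam
    have hlam0 : 0 ≤ lam := le_max_left _ _
    set w : Fin m → ℝ := fun i => y0 i + lam * yv i with hw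
    have hprw : ∀ x, pr x w = pr x y0 + lam * pr x yv := by
      intro x; rw [hw, pr_add_right' x y0 (fun i => lam * yv i), pr_mul_right]
    have hKbound : econj f w ≤ ((lam * u - c0 : ℝ) : EReal) := by
      refine econj_le fun x => ?_
      rcases ereal_cases (f x) with hfx | hfx | ⟨rx, hfx⟩
      · exact absurd hfx (hnbot x)
      · rw [hfx, EReal.sub_top]; exact bot_le
      · rw [hfx, ← EReal.coe_sub, EReal.coe_le_coe_iff]
        have h5 : pr x y0 + c0 ≤ rx := by
          have := hmin x; rw [hfx, EReal.coe_le_coe_iff] at this; exact this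
        have h6 : pr x yv < u := hdomv x rx hfx
        have := mul_le_mul_of_nonneg_left h6.le hlam0
        rw [hprw]; nlinarith
    have hchain : ((pr w x0 - (lam * u - c0) : ℝ) : EReal) ≤ econj (econj f) x0 := by
      calc ((pr w x0 - (lam * u - c0) : ℝ) : EReal)
          = ((pr w x0 : ℝ) : EReal) - ((lam * u - c0 : ℝ) : EReal) := by rw [EReal.coe_sub]
        _ ≤ ((pr w x0 : ℝ) : EReal) - econj f w := EReal.sub_le_sub (le_refl _) hKbound
        _ ≤ econj (econj f) x0 := le_econj (econj f) w x0
    refine le_trans ?_ hchain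
    rw [EReal.coe_le_coe_iff]
    have h7 : (β - pr x0 y0 - c0) / (pr x0 yv - u) ≤ lam := le_max_right _ _
    have := mul_le_mul_of_nonneg_right h7 hden.le
    rw [div_mul_cancel₀ _ (ne_of_gt hden)] at this
    have h8 : pr w x0 = pr x0 y0 + lam * pr x0 yv := by rw [pr_comm, hprw]
    nlinarith
  · -- non-vertical case sv < 0
    set c : ℝ := (-sv)⁻¹ with hc
    have hcpos : 0 < c := inv_pos.2 (by linarith)
    have hcs : c * (-sv) = 1 := inv_mul_cancel₀ (by linarith)
    set y : Fin m → ℝ := fun i => c * yv i with hy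
    have hpry : ∀ x, pr x y = c * pr x yv := fun x => pr_mul_right x c yv
    have hKbound : econj f y ≤ ((c * u : ℝ) : EReal) := by
      refine econj_le fun x => ?_
      rcases ereal_cases (f x) with hfx | hfx | ⟨rx, hfx⟩
      · exact absurd hfx (hnbot x)
      · rw [hfx, EReal.sub_top]; exact bot_le
      · rw [hfx, ← EReal.coe_sub, EReal.coe_le_coe_iff, hpry]
        have h4 := hdom x rx hfx
        -- pr x yv + rx * sv < u  ⇒  c * pr x yv - rx ≤ c * u
        have key := mul_le_mul_of_nonneg_left (show pr x yv - u ≤ rx * (-sv) by nlinarith) hcpos.le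
        have e1 : c * (rx * (-sv)) = rx := by rw [mul_comm rx, ← mul_assoc, hcs, one_mul]
        nlinarith
    have hchain : ((pr y x0 - c * u : ℝ) : EReal) ≤ econj (econj f) x0 := by
      calc ((pr y x0 - c * u : ℝ) : EReal)
          = ((pr y x0 : ℝ) : EReal) - ((c * u : ℝ) : EReal) := by rw [EReal.coe_sub]
        _ ≤ ((pr y x0 : ℝ) : EReal) - econj f y := EReal.sub_le_sub (le_refl _) hKbound
        _ ≤ econj (econj f) x0 := le_econj (econj f) y x0
    refine le_trans ?_ hchain
    rw [EReal.coe_le_coe_iff]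
    have h8 : pr y x0 = c * pr x0 yv := by rw [pr_comm, hpry]
    -- u < pr x0 yv + β * sv  ⇒  β ≤ c * pr x0 yv - c * u
    have key := mul_le_mul_of_nonneg_left (show β * (-sv) ≤ pr x0 yv - u by nlinarith) hcpos.le
    have e1 : c * (β * (-sv)) = β := by rw [mul_comm β, ← mul_assoc, hcs, one_mul]
    nlinarith

lemma sublevel_convex {G : (Fin m → ℝ) → EReal} (hnbot : ∀ x, G x ≠ ⊥)
    (hconv : ∀ (x y : Fin m → ℝ) (a b : ℝ), 0 ≤ a → 0 ≤ b → a + b = 1 →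
      G (a • x + b • y) ≤ (a : EReal) * G x + (b : EReal) * G y) (M : ℝ) :
    Convex ℝ {w | G w ≤ (M : EReal)} := by
  intro x hx y hy a b ha hb hab
  simp only [Set.mem_setOf_eq] at hx hy ⊢
  rcases ereal_cases (G x) with h1 | h1 | ⟨r1, h1⟩
  · exact absurd h1 (hnbot x)
  · rw [h1] at hx; exact absurd (top_le_iff.1 hx) (EReal.coe_ne_top M)
  rcases ereal_cases (G y) with h2 | h2 | ⟨r2, h2⟩
  · exact absurd h2 (hnbot y)
  · rw [h2] at hy; exact absurd (top_le_iff.1 hy) (EReal.coe_ne_top M)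
  have hr1 : r1 ≤ M := by rw [h1, EReal.coe_le_coe_iff] at hx; exact hx
  have hr2 : r2 ≤ M := by rw [h2, EReal.coe_le_coe_iff] at hy; exact hy
  have := hconv x y a b ha hb hab
  rw [h1, h2, ← EReal.coe_mul, ← EReal.coe_mul, ← EReal.coe_add] at this
  refine le_trans this ?_
  rw [EReal.coe_le_coe_iff]
  have e : a * M + b * M = M := by rw [← add_mul, hab, one_mul]
  have := mul_le_mul_of_nonneg_left hr1 ha
  have := mul_le_mul_of_nonneg_left hr2 hb
  linarith

/-- Interior-point subdifferentiability for a convex function on `ℝ^m`. -/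
lemma int_subdiff {G : (Fin m → ℝ) → EReal}
    (hconv : ∀ (x y : Fin m → ℝ) (a b : ℝ), 0 ≤ a → 0 ≤ b → a + b = 1 →
      G (a • x + b • y) ≤ (a : EReal) * G x + (b : EReal) * G y)
    (hnbot : ∀ w, G w ≠ ⊥) {g0 : ℝ} (hG0 : G 0 = (g0 : EReal))
    {ρ : ℝ} (hρ : 0 < ρ) (hball : ∀ w : Fin m → ℝ, ‖w‖ < ρ → G w ≠ ⊤) :
    ∃ z : Fin m → ℝ, ∀ w, G 0 + ((pr z w : ℝ) : EReal) ≤ G w := by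
  classical
  set δ : ℝ := ρ / 2 with hδ
  have hδpos : 0 < δ := by positivity
  -- vertices
  set v : Fin m → (Fin m → ℝ) := fun i => fun j => if i = j then δ else 0 with hv
  have hvnorm : ∀ i, ‖v i‖ < ρ := by
    intro i
    have : ‖v i‖ ≤ δ := by
      rw [pi_norm_le_iff_of_nonneg hδpos.le]
      intro j
      by_cases hij : i = j <;> simp [hv, hij, abs_of_pos hδpos, hδpos.le]
    linarith
  have hvdom : ∀ i, G (v i) ≠ ⊤ := fun i => hball _ (hvnorm i)
  have hval : ∀ i, ∃ r : ℝ, G (v i) = (r : EReal) := by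
    intro i
    rcases ereal_cases (G (v i)) with h | h | ⟨r, h⟩
    · exact absurd h (hnbot _)
    · exact absurd h (hvdom i)
    · exact ⟨r, h⟩
  choose gv hgv using hval
  set M : ℝ := |g0| + ∑ i, |gv i| with hM
  have habs : ∀ i, |gv i| ≤ ∑ i, |gv i| :=
    fun i => Finset.single_le_sum (fun j _ => abs_nonneg (gv j)) (Finset.mem_univ i)
  have hgvM : ∀ i, gv i ≤ M := by
    intro i
    have h1 := habs i
    have := le_abs_self (gv i)
    have := abs_nonneg g0
    linarith
  have hg0M : g0 ≤ M := by
    have : 0 ≤ ∑ i, |gv i| := Finset.sum_nonneg fun j _ => abs_nonneg _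
    have := le_abs_self g0
    linarith
  -- sublevel set
  set A : Set (Fin m → ℝ) := {w | G w ≤ (M : EReal)} with hA
  have hAconv : Convex ℝ A := sublevel_convex hnbot hconv M
  have h0A : (0 : Fin m → ℝ) ∈ A := by simp only [hA, Set.mem_setOf_eq, hG0]; exact_mod_cast hg0M
  have hvA : ∀ i, v i ∈ A := by
    intro i; simp only [hA, Set.mem_setOf_eq, hgv i]; exact_mod_cast hgvM i
  -- open simplex
  set O : Set (Fin m → ℝ) := {w | (∀ i, 0 < w i) ∧ ∑ i, w i < δ} with hO
  have hOopen : IsOpen O := by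
    have h1 : IsOpen {w : Fin m → ℝ | ∀ i, 0 < w i} := by
      have : {w : Fin m → ℝ | ∀ i, 0 < w i} = ⋂ i, {w | 0 < w i} := by
        ext w; simp
      rw [this]
      exact isOpen_iInter_of_finite fun i => isOpen_lt continuous_const (continuous_apply i)
    have h2 : IsOpen {w : Fin m → ℝ | ∑ i, w i < δ} :=
      isOpen_lt (by continuity) continuous_const
    exact (h1.inter h2).mono (by intro w hw; exact hw) |>.mono fun w hw => hw
  have hOsub : O ⊆ A := by
    intro w hw
    obtain ⟨hwpos, hwsum⟩ := hw
    set cw : Option (Fin m) → ℝ := fun o => o.elim (1 - ∑ i, w i / δ) (fun i => w i / δ)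
      with hcw
    set pt : Option (Fin m) → (Fin m → ℝ) := fun o => o.elim 0 v with hpt
    have hsumw : ∑ i, w i / δ = (∑ i, w i) / δ := by rw [Finset.sum_div]
    have hnn : ∀ o ∈ Finset.univ, 0 ≤ cw o := by
      rintro (_ | i) _
      · simp only [hcw, Option.elim]
        rw [hsumw]
        have : (∑ i, w i) / δ < 1 := (div_lt_one hδpos).2 hwsum
        linarith
      · simp only [hcw, Option.elim]
        exact div_nonneg (hwpos i).le hδpos.le
    have hsum1 : ∑ o : Option (Fin m), cw o = 1 := by
      rw [Fintype.sum_option]; simp only [hcw, Option.elim]; ring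
    have hmem : ∀ o ∈ Finset.univ, pt o ∈ A := by
      rintro (_ | i) _
      · exact h0A
      · exact hvA i
    have := hAconv.sum_mem hnn hsum1 hmem
    have hrepr : w = ∑ o : Option (Fin m), cw o • pt o := by
      rw [Fintype.sum_option]
      simp only [hcw, hpt, Option.elim, smul_zero, zero_add]
      funext j
      simp only [Finset.sum_apply, Pi.smul_apply, smul_eq_mul, hv]
      rw [Finset.sum_congr rfl (fun i _ => by
        show w i / δ * (if i = j then δ else 0) = if i = j then w i else 0
        by_cases hij : i = j
        · simp [hij]; field_simp
        · simp [hij])]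
      simp
    rw [hrepr]; exact this
  -- O is nonempty
  set w0 : Fin m → ℝ := fun _ => δ / (2 * (m + 1)) with hw0
  have hw0O : w0 ∈ O := by
    constructor
    · intro i; show 0 < δ / (2 * ((m : ℝ) + 1)); positivity
    · show (∑ _i : Fin m, δ / (2 * ((m : ℝ) + 1))) < δ
      rw [Finset.sum_const, Finset.card_univ, Fintype.card_fin, nsmul_eq_mul]
      have h2m : (0:ℝ) < 2 * ((m : ℝ) + 1) := by positivity
      have hlt : (m : ℝ) < 2 * ((m : ℝ) + 1) := by
        have : (0:ℝ) ≤ (m:ℝ) := Nat.cast_nonneg m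
        linarith
      calc (m : ℝ) * (δ / (2 * ((m:ℝ) + 1))) = δ * ((m:ℝ) / (2 * ((m:ℝ) + 1))) := by ring
        _ < δ * 1 := by
            exact mul_lt_mul_of_pos_left ((div_lt_one h2m).2 hlt) hδpos
        _ = δ := mul_one δ
  -- interior point of the epigraph
  have hepiconv : Convex ℝ (epi G) := epi_convex hnbot hconv
  have hU : (O ×ˢ Set.Ioi M) ⊆ epi G := by
    rintro ⟨w, t⟩ ⟨hw, ht⟩
    simp only [epi, Set.mem_setOf_eq]
    exact le_trans (hOsub hw) (by exact_mod_cast le_of_lt ht)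
  have hUint : O ×ˢ Set.Ioi M ⊆ interior (epi G) :=
    interior_maximal hU (hOopen.prod isOpen_Ioi)
  have hp0 : ((w0, M + 1) : (Fin m → ℝ) × ℝ) ∈ interior (epi G) :=
    hUint ⟨hw0O, by simp only [Set.mem_Ioi]; linarith⟩
  -- the point (0, g0) is not in the interior of the epigraph
  have hx0ni : (((0 : Fin m → ℝ), g0) : (Fin m → ℝ) × ℝ) ∉ interior (epi G) := by
    intro hmem
    have h1 : epi G ∈ 𝓝 (((0 : Fin m → ℝ), g0) : (Fin m → ℝ) × ℝ) :=
      mem_interior_iff_mem_nhds.1 hmem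
    have hc : ContinuousAt (fun t : ℝ => (((0 : Fin m → ℝ), t) : (Fin m → ℝ) × ℝ)) g0 :=
      (continuous_const.prodMk continuous_id).continuousAt
    have h2 := hc.preimage_mem_nhds h1
    obtain ⟨ε, hε, hball2⟩ := Metric.mem_nhds_iff.1 h2
    have hmem2 : (g0 - ε / 2) ∈ Metric.ball g0 ε := by
      simp only [Metric.mem_ball, Real.dist_eq]
      rw [abs_of_nonpos (by linarith)]
      linarith
    have h3 := hball2 hmem2
    simp only [Set.mem_preimage, epi, Set.mem_setOf_eq, hG0, EReal.coe_le_coe_iff] at h3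
    linarith
  obtain ⟨L, hsep⟩ :=
    geometric_hahn_banach_open_point hepiconv.interior isOpen_interior hx0ni
  -- extend the separation to all of the epigraph
  have hext : ∀ p ∈ epi G, L p ≤ L (((0 : Fin m → ℝ), g0) : (Fin m → ℝ) × ℝ) := by
    intro p hp
    by_contra hgt
    push_neg at hgt
    set q : (Fin m → ℝ) × ℝ := (w0, M + 1) with hq
    set D : ℝ := |L q - L p| + 1 with hD
    have hDpos : 0 < D := by positivity
    set x₀ : (Fin m → ℝ) × ℝ := ((0 : Fin m → ℝ), g0) with hx₀
    have hnum : 0 < L p - L x₀ := by simp only [hx₀]; linarith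
    set θ : ℝ := min 1 ((L p - L x₀) / (2 * D)) with hθ
    have hθ0 : 0 < θ := lt_min one_pos (by positivity)
    have hθ1 : θ ≤ 1 := min_le_left _ _
    have hcombo : θ • q + (1 - θ) • p ∈ interior (epi G) :=
      hepiconv.combo_interior_self_mem_interior hp0 hp hθ0 (by linarith) (by ring)
    have hlt := hsep _ hcombo
    rw [map_add, map_smul, map_smul, smul_eq_mul, smul_eq_mul] at hlt
    have hθD : θ * D ≤ (L p - L x₀) / 2 := by
      have h5 : θ ≤ (L p - L x₀) / (2 * D) := min_le_right _ _
      have h6 := mul_le_mul_of_nonneg_right h5 hDpos.le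
      have h7 : (L p - L x₀) / (2 * D) * D = (L p - L x₀) / 2 := by
        field_simp
      linarith [h6, h7.symm.le]
    have habs2 : -(D) ≤ L q - L p := by
      have := neg_abs_le (L q - L p)
      simp only [hD]; linarith
    nlinarith [mul_le_mul_of_nonneg_left habs2 hθ0.le]
  -- decompose L
  set yv : Fin m → ℝ := fun i => L (fun j => if i = j then 1 else 0, 0) with hyv
  set sv : ℝ := L (0, 1) with hsv
  have hL : ∀ (x : Fin m → ℝ) (t : ℝ), L (x, t) = pr x yv + t * sv := fun x t => Lrep L x t
  have hpr0 : pr (0 : Fin m → ℝ) yv = 0 := by unfold pr; simp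
  have hx0val : L (((0 : Fin m → ℝ), g0) : (Fin m → ℝ) × ℝ) = g0 * sv := by
    rw [hL, hpr0, zero_add]
  have hepile : ∀ (x : Fin m → ℝ) (t : ℝ), G x ≤ (t : EReal) → pr x yv + t * sv ≤ g0 * sv := by
    intro x t hxt
    have : ((x, t) : (Fin m → ℝ) × ℝ) ∈ epi G := hxt
    have := hext _ this
    rwa [hL, hx0val] at this
  -- sv < 0
  have hsvneg : sv < 0 := by
    rcases lt_or_ge sv 0 with h | h
    · exact h
    have hsle : sv ≤ 0 := by
      have h1 := hepile 0 (g0 + 1) (by rw [hG0]; exact_mod_cast (by linarith : g0 ≤ g0 + 1))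
      rw [hpr0, zero_add] at h1
      nlinarith
    have hsv0 : sv = 0 := le_antisymm hsle h
    -- then yv = 0 and L ≡ 0, contradicting the strict separation
    exfalso
    have hyv0 : ∀ i, yv i = 0 := by
      intro i
      have hvpos := hepile (v i) (gv i) (by rw [hgv i])
      have hvneg : pr (fun j => -(v i j)) yv ≤ 0 := by
        have hnorm : ‖(fun j => -(v i j) : Fin m → ℝ)‖ < ρ := by
          have : (fun j => -(v i j) : Fin m → ℝ) = -(v i) := by funext j; simp
          rw [this, norm_neg]; exact hvnorm i
        have hne := hball _ hnorm
        rcases ereal_cases (G (fun j => -(v i j))) with h' | h' | ⟨r', h'⟩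
        · exact absurd h' (hnbot _)
        · exact absurd h' hne
        · have := hepile _ r' (le_of_eq h')
          rw [hsv0] at this; simp at this; linarith [this]
      have hprneg : pr (fun j => -(v i j)) yv = -(pr (v i) yv) := by
        unfold pr; rw [← Finset.sum_neg_distrib]
        exact Finset.sum_congr rfl fun j _ => by ring
      have hvpos' : pr (v i) yv ≤ 0 := by rw [hsv0] at hvpos; simp at hvpos; linarith [hvpos]
      have hzero : pr (v i) yv = 0 := by rw [hprneg] at hvneg; linarith
      have hpre : pr (v i) yv = δ * yv i := by
        unfold pr
        rw [show ∑ j, v i j * yv j = ∑ j, (if i = j then δ * yv j else 0) from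
          Finset.sum_congr rfl fun j _ => by by_cases hij : i = j <;> simp [hv, hij]]
        rw [Finset.sum_ite_eq Finset.univ i (fun j => δ * yv j)]
        simp
      rw [hpre] at hzero
      exact (mul_eq_zero.1 hzero).resolve_left (ne_of_gt hδpos)
    have hLzero : ∀ p : (Fin m → ℝ) × ℝ, L p = 0 := by
      rintro ⟨x, t⟩
      rw [hL, hsv0, mul_zero, add_zero]
      unfold pr
      rw [Finset.sum_congr rfl (fun i _ => by rw [hyv0 i, mul_zero])]
      simp
    have := hsep _ hp0
    rw [hLzero, hLzero] at this
    exact lt_irrefl 0 this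
  -- construct the subgradient
  set c : ℝ := (-sv)⁻¹ with hc
  have hcpos : 0 < c := inv_pos.2 (by linarith)
  have hcs : c * (-sv) = 1 := inv_mul_cancel₀ (by linarith)
  refine ⟨fun i => c * yv i, fun w => ?_⟩
  rcases ereal_cases (G w) with hfw | hfw | ⟨rw', hfw⟩
  · exact absurd hfw (hnbot w)
  · rw [hfw]; exact le_top
  · rw [hfw, hG0, ← EReal.coe_add, EReal.coe_le_coe_iff]
    have h4 := hepile w rw' (le_of_eq hfw)
    have hprc : pr (fun i => c * yv i) w = c * pr w yv := by
      rw [pr_comm, pr_mul_right]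
    rw [hprc]
    -- pr w yv + rw' * sv ≤ g0 * sv  ⇒  g0 + c * pr w yv ≤ rw'
    have key := mul_le_mul_of_nonneg_left
      (show pr w yv ≤ (rw' - g0) * (-sv) by nlinarith) hcpos.le
    have e1 : c * ((rw' - g0) * (-sv)) = rw' - g0 := by
      rw [mul_comm (rw' - g0), ← mul_assoc, hcs, one_mul]
    linarith [key, e1.le]

/-- Concrete characterisation of membership in the intrinsic interior. -/
lemma mem_intrinsicInterior_iff' {s : Set (Fin m → ℝ)} {x : Fin m → ℝ} :
    x ∈ intrinsicInterior ℝ s ↔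
      x ∈ affineSpan ℝ s ∧ ∃ ε > 0, ∀ y ∈ affineSpan ℝ s, dist y x < ε → y ∈ s := by
  constructor
  · rintro ⟨p, hp, rfl⟩
    refine ⟨p.2, ?_⟩
    have h1 : ((↑) ⁻¹' s : Set <| affineSpan ℝ s) ∈ 𝓝 p := mem_interior_iff_mem_nhds.1 hp
    obtain ⟨ε, hε, hball⟩ := Metric.mem_nhds_iff.1 h1
    refine ⟨ε, hε, fun y hy hd => ?_⟩
    have : (⟨y, hy⟩ : affineSpan ℝ s) ∈ Metric.ball p ε := by
      rw [Metric.mem_ball, Subtype.dist_eq]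
      exact hd
    exact hball this
  · rintro ⟨hx, ε, hε, h⟩
    refine ⟨⟨x, hx⟩, ?_, rfl⟩
    rw [mem_interior_iff_mem_nhds, Metric.mem_nhds_iff]
    refine ⟨ε, hε, fun q hq => ?_⟩
    rw [Metric.mem_ball, Subtype.dist_eq] at hq
    exact h q q.2 hq

/-- For a convex set, the closure is contained in the closure of the intrinsic interior. -/
lemma closure_subset_closure_intrinsicInterior {s : Set (Fin m → ℝ)} (hconv : Convex ℝ s) :
    closure s ⊆ closure (intrinsicInterior ℝ s) := by
  rcases s.eq_empty_or_nonempty with rfl | hne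
  · rw [intrinsicInterior_empty]
  obtain ⟨z, hz⟩ := Set.Nonempty.intrinsicInterior hconv hne
  refine closure_minimal (fun x hx => ?_) isClosed_closure
  obtain ⟨hzspan, r, hr, hri⟩ := mem_intrinsicInterior_iff'.1 hz
  have hzs : z ∈ s := hri z hzspan (by rw [dist_self]; exact hr)
  rw [Metric.mem_closure_iff]
  intro ε hεpos
  set θ : ℝ := min 1 (ε / (2 * (‖z - x‖ + 1))) with hθ
  have hden : (0:ℝ) < 2 * (‖z - x‖ + 1) := by positivity
  have hθ0 : 0 < θ := lt_min one_pos (by positivity)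
  have hθ1 : θ ≤ 1 := min_le_left _ _
  set p : Fin m → ℝ := θ • z + (1 - θ) • x with hp
  have hxspan : x ∈ affineSpan ℝ s := subset_affineSpan ℝ s hx
  refine ⟨p, ?_, ?_⟩
  · -- p ∈ intrinsicInterior ℝ s
    rw [mem_intrinsicInterior_iff']
    have hpspan : p ∈ affineSpan ℝ s := by
      have hdir : θ • (z - x) ∈ (affineSpan ℝ s).direction :=
        Submodule.smul_mem _ θ (by
          have := AffineSubspace.vsub_mem_direction hzspan hxspan
          rwa [vsub_eq_sub] at this)
      have := AffineSubspace.vadd_mem_of_mem_direction hdir hxspan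
      rw [vadd_eq_add] at this
      have hpe : θ • (z - x) + x = p := by rw [hp, smul_sub, sub_smul, one_smul]; abel
      rwa [hpe] at this
    refine ⟨hpspan, θ * r, by positivity, fun y hy hd => ?_⟩
    set v : Fin m → ℝ := y - p with hv
    have hvdir : v ∈ (affineSpan ℝ s).direction := by
      have := AffineSubspace.vsub_mem_direction hy hpspan
      rwa [vsub_eq_sub] at this
    set z' : Fin m → ℝ := z + θ⁻¹ • v with hz'
    have hz'span : z' ∈ affineSpan ℝ s := by
      have hdir : θ⁻¹ • v ∈ (affineSpan ℝ s).direction := Submodule.smul_mem _ _ hvdir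
      have := AffineSubspace.vadd_mem_of_mem_direction hdir hzspan
      rw [vadd_eq_add] at this
      rwa [add_comm] at this
    have hz's : z' ∈ s := by
      refine hri z' hz'span ?_
      rw [dist_eq_norm]
      have : z' - z = θ⁻¹ • v := by rw [hz']; abel
      rw [this, norm_smul, Real.norm_eq_abs, abs_of_pos (inv_pos.2 hθ0)]
      have hnv : ‖v‖ = dist y p := by rw [dist_eq_norm, hv]
      rw [hnv]
      calc θ⁻¹ * dist y p < θ⁻¹ * (θ * r) :=
            mul_lt_mul_of_pos_left hd (inv_pos.2 hθ0)
        _ = r := by field_simp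
    have hyrepr : y = θ • z' + (1 - θ) • x := by
      rw [hz', smul_add, smul_smul, mul_inv_cancel₀ (ne_of_gt hθ0), one_smul, hv, hp]
      abel
    rw [hyrepr]
    exact hconv hz's hx hθ0.le (by linarith) (by ring)
  · -- dist x p < ε
    have : x - p = θ • (x - z) := by rw [hp, smul_sub, sub_smul, one_smul]; abel
    rw [dist_eq_norm, this, norm_smul, Real.norm_eq_abs, abs_of_pos hθ0]
    have h2 : θ ≤ ε / (2 * (‖z - x‖ + 1)) := min_le_right _ _
    have h3 : ‖x - z‖ = ‖z - x‖ := by rw [← neg_sub, norm_neg]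
    have h4 : θ * ‖x - z‖ ≤ ε / (2 * (‖z - x‖ + 1)) * (‖z - x‖ + 1) := by
      rw [h3]
      have : (0:ℝ) ≤ ‖z - x‖ := norm_nonneg _
      nlinarith [norm_nonneg (z - x)]
    have h5 : ε / (2 * (‖z - x‖ + 1)) * (‖z - x‖ + 1) = ε / 2 := by
      field_simp
    calc θ * ‖x - z‖ ≤ ε / 2 := by rw [h5] at h4; exact h4
      _ < ε := by linarith

/-- Subdifferentiability of the conjugate at relative interior points of its domain. -/
lemma ri_subdiff {f : (Fin m → ℝ) → EReal}
    (hnbot : ∀ x, f x ≠ ⊥) (hproper : ∃ x, f x ≠ ⊤)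
    {y0 : Fin m → ℝ} (hy0 : y0 ∈ intrinsicInterior ℝ {y | econj f y ≠ ⊤}) :
    ∃ z, ESubgrad (econj f) y0 z := by
  classical
  set s : Set (Fin m → ℝ) := {y | econj f y ≠ ⊤} with hs
  set g : (Fin m → ℝ) → EReal := econj f with hg
  have hgnb : ∀ y, g y ≠ ⊥ := econj_ne_bot hnbot hproper
  obtain ⟨hy0span, ε, hε, hri⟩ := mem_intrinsicInterior_iff'.1 hy0
  have hy0s : y0 ∈ s := hri y0 hy0span (by rw [dist_self]; exact hε)
  have hy0real : ∃ g0 : ℝ, g y0 = (g0 : EReal) := by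
    rcases ereal_cases (g y0) with h | h | ⟨r, h⟩
    · exact absurd h (hgnb y0)
    · exact absurd h hy0s
    · exact ⟨r, h⟩
  obtain ⟨g0, hg0⟩ := hy0real
  -- projection onto the direction of the affine span
  set V : Submodule ℝ (Fin m → ℝ) := (affineSpan ℝ s).direction with hV
  obtain ⟨W, hW⟩ := Submodule.exists_isCompl V
  set P : (Fin m → ℝ) →ₗ[ℝ] (Fin m → ℝ) := V.subtype.comp (V.projectionOnto W hW) with hP
  have hPmem : ∀ w, P w ∈ V := fun w => (V.projectionOnto W hW w).2
  have hPfix : ∀ v, v ∈ V → P v = v := by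
    intro v hv
    show (V.subtype) (V.projectionOnto W hW v) = v
    rw [show (V.projectionOnto W hW) v = (V.projectionOnto W hW) (⟨v, hv⟩ : V) from rfl,
      Submodule.linearProjOfIsCompl_apply_left hW ⟨v, hv⟩]
    rfl
  set Pc : (Fin m → ℝ) →L[ℝ] (Fin m → ℝ) := LinearMap.toContinuousLinearMap P with hPc
  set C : ℝ := ‖Pc‖ + 1 with hC
  have hCpos : 0 < C := by positivity
  set G : (Fin m → ℝ) → EReal := fun w => g (y0 + Pc w) with hG
  have hG0 : G 0 = (g0 : EReal) := by
    simp only [hG, map_zero, add_zero, hg0]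
  have hGnb : ∀ w, G w ≠ ⊥ := fun w => hgnb _
  have hGconv : ∀ (x y : Fin m → ℝ) (a b : ℝ), 0 ≤ a → 0 ≤ b → a + b = 1 →
      G (a • x + b • y) ≤ (a : EReal) * G x + (b : EReal) * G y := by
    intro x y a b ha hb hab
    have harg : y0 + Pc (a • x + b • y) = a • (y0 + Pc x) + b • (y0 + Pc y) := by
      have e : a • (y0 + Pc x) + b • (y0 + Pc y) = (a + b) • y0 + (a • Pc x + b • Pc y) := by
        rw [smul_add, smul_add, add_smul]; abel
      rw [e, hab, one_smul, map_add, map_smul, map_smul]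
    rw [hG]
    simp only []
    rw [harg]
    exact econj_convex hnbot _ _ ha hb hab
  have hballG : ∀ w : Fin m → ℝ, ‖w‖ < ε / C → G w ≠ ⊤ := by
    intro w hw
    have hPw : ‖Pc w‖ < ε := by
      have h1 : ‖Pc w‖ ≤ ‖Pc‖ * ‖w‖ := Pc.le_opNorm w
      have h2 : ‖Pc‖ * ‖w‖ ≤ C * ‖w‖ := by
        have : ‖Pc‖ ≤ C := by rw [hC]; linarith
        exact mul_le_mul_of_nonneg_right this (norm_nonneg w)
      have h3 : C * ‖w‖ < C * (ε / C) := mul_lt_mul_of_pos_left hw hCpos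
      have h4 : C * (ε / C) = ε := by field_simp
      calc ‖Pc w‖ ≤ ‖Pc‖ * ‖w‖ := h1
        _ ≤ C * ‖w‖ := h2
        _ < C * (ε / C) := h3
        _ = ε := h4
    have hdir : Pc w ∈ V := hPmem w
    have hspan : y0 + Pc w ∈ affineSpan ℝ s := by
      have := AffineSubspace.vadd_mem_of_mem_direction hdir hy0span
      rwa [vadd_eq_add, add_comm] at this
    have hd : dist (y0 + Pc w) y0 < ε := by
      rw [dist_eq_norm]
      have : y0 + Pc w - y0 = Pc w := by abel
      rwa [this]
    exact hri _ hspan hd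
  obtain ⟨z, hzsub⟩ := int_subdiff hGconv hGnb hG0 (by positivity : (0:ℝ) < ε / C) hballG
  refine ⟨z, fun q => ?_⟩
  show g y0 + _ ≤ g q
  rcases ereal_cases (g q) with hq | hq | ⟨rq, hq⟩
  · exact absurd hq (hgnb q)
  · rw [hq]; exact le_top
  · have hqs : q ∈ s := by rw [hs]; simp only [Set.mem_setOf_eq, hq]; exact EReal.coe_ne_top rq
    have hqspan : q ∈ affineSpan ℝ s := subset_affineSpan ℝ s hqs
    have hqdir : q - y0 ∈ V := by
      have := AffineSubspace.vsub_mem_direction hqspan hy0span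
      rwa [vsub_eq_sub] at this
    have hPq : Pc (q - y0) = q - y0 := hPfix _ hqdir
    have hGq : G (q - y0) = g q := by
      rw [hG]; simp only []; rw [hPq]
      congr 1
      abel
    have := hzsub (q - y0)
    rw [hG0, hGq] at this
    rw [← hg0] at this
    have hsum : (∑ i, z i * (q i - y0 i)) = pr z (q - y0) := by
      unfold pr
      exact Finset.sum_congr rfl fun i _ => rfl
    rw [hsum]
    exact this

/-- Let `f` be a proper closed convex function on `ℝ^m` (convex,
nowhere `−∞`, not identically `+∞`, lower semicontinuous).  Then `∂f(ℝ^m)` is exactly the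
set of points at which `f*` is subdifferentiable; in particular
`ri(dom f*) ⊆ ∂f(ℝ^m) ⊆ dom f*` and `cl ∂f(ℝ^m) = cl dom f*`. -/
theorem range_subdifferential_eq_subdifferentiability_of_conj
    (m : ℕ)
    (f : (Fin m → ℝ) → EReal)
    (hconv : ∀ (x y : Fin m → ℝ) (a b : ℝ), 0 ≤ a → 0 ≤ b → a + b = 1 →
      f (a • x + b • y) ≤ (a : EReal) * f x + (b : EReal) * f y)
    (hnbot : ∀ x, f x ≠ ⊥)
    (hproper : ∃ x, f x ≠ ⊤)
    (hclosed : LowerSemicontinuous f) :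
    (∀ y : Fin m → ℝ, (∃ x, ESubgrad f x y) ↔ ∃ z, ESubgrad (econj f) y z) ∧
    intrinsicInterior ℝ {y | econj f y ≠ ⊤} ⊆ {y | ∃ x, ESubgrad f x y} ∧
    {y | ∃ x, ESubgrad f x y} ⊆ {y | econj f y ≠ ⊤} ∧
    closure {y | ∃ x, ESubgrad f x y} = closure {y | econj f y ≠ ⊤} := by
  have hiff : ∀ y : Fin m → ℝ, (∃ x, ESubgrad f x y) ↔ ∃ z, ESubgrad (econj f) y z := by
    intro y
    constructor
    · rintro ⟨x, hx⟩; exact ⟨x, esub_fwd hx⟩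
    · rintro ⟨z, hz⟩
      refine ⟨z, fun w => ?_⟩
      have h2 := esub_fwd hz
      calc f z + (((∑ i, y i * (w i - z i)) : ℝ) : EReal)
          ≤ econj (econj f) z + (((∑ i, y i * (w i - z i)) : ℝ) : EReal) :=
            add_le_add (biconj_ge hconv hnbot hproper hclosed z) (le_refl _)
        _ ≤ econj (econj f) w := h2 w
        _ ≤ f w := biconj_le hnbot w
  have hsub : {y | ∃ x, ESubgrad f x y} ⊆ {y | econj f y ≠ ⊤} := by
    rintro y ⟨x, hx⟩
    exact esub_dom hx hnbot hproper
  have hri : intrinsicInterior ℝ {y | econj f y ≠ ⊤} ⊆ {y | ∃ x, ESubgrad f x y} := by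
    intro y hy
    exact (hiff y).2 (ri_subdiff hnbot hproper hy)
  refine ⟨hiff, hri, hsub, ?_⟩
  refine Subset.antisymm (closure_mono hsub) ?_
  exact le_trans (closure_subset_closure_intrinsicInterior (dom_econj_convex hnbot hproper))
    (closure_mono hri)
end Soft
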